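/- Let A : Ω → L(H) be an observable on a finite-dimensional complex Hilbert space H with finite outcome set Ω = {1, …, n}, and for each j fix vectors d_{j,1}, …, d_{j,r_j} ∈ H (r_j = rank A(j)) giving a spectral decomposition A(j) = ∑_{k=1}^{r_j} |d_{j,k}⟩⟨d_{j,k}|. Let M = ℂ^{r_1} ⊕ ⋯ ⊕ ℂ^{r_n} with orthonormal basis {e_{j,k} : 1 ≤ k ≤ r_j, 1 ≤ j ≤ n}, define J : H → M by Jψ = ∑_{j,k} ⟨d_{j,k}, ψ⟩ e_{j,k}, and define P(j) = ∑_{k=1}^{r_j} |e_{j,k}⟩⟨e_{j,k}|. Then J is an isometry, P is a projection-valued measure on M, A(j) = J* P(j) J for all j ∈ Ω, and the vectors P(j)Jφ (j ∈ Ω, φ ∈ H) span M; that is, (M, P, J) is a minimal Naimark dilation of A. -/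

import Mathlib

open scoped ComplexOrder

noncomputable section

/-- A positive semidefinite operator on a finite-dimensional complex Hilbert space. -/
def IsPosOp {E : Type*} [NormedAddCommGroup E] [InnerProductSpace ℂ E]
    [FiniteDimensional ℂ E] (T : E →ₗ[ℂ] E) : Prop :=
  LinearMap.adjoint T = T ∧ ∀ x : E, 0 ≤ (inner ℂ (T x) x : ℂ)

/-- An orthogonal projection: a self-adjoint idempotent operator. -/
def IsOrthoProj {E : Type*} [NormedAddCommGroup E] [InnerProductSpace ℂ E]
    [FiniteDimensional ℂ E] (P : E →ₗ[ℂ] E) : Prop :=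
  LinearMap.adjoint P = P ∧ P ∘ₗ P = P

/-- A discrete observable (POVM) with finite outcome set `Ω`. -/
def IsPOVM {E : Type*} [NormedAddCommGroup E] [InnerProductSpace ℂ E]
    [FiniteDimensional ℂ E] {Ω : Type*} [Fintype Ω] (A : Ω → E →ₗ[ℂ] E) : Prop :=
  (∀ j, IsPosOp (A j)) ∧ ∑ j, A j = (1 : E →ₗ[ℂ] E)

/-- A projection-valued measure (PVM). -/
def IsPVM {E : Type*} [NormedAddCommGroup E] [InnerProductSpace ℂ E]
    [FiniteDimensional ℂ E] {Ω : Type*} [Fintype Ω] (P : Ω → E →ₗ[ℂ] E) : Prop :=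
  (∀ j, IsOrthoProj (P j)) ∧ ∑ j, P j = (1 : E →ₗ[ℂ] E)

/-- An isometry between inner product spaces: `J* J = 1`. -/
def IsIsometryOp {E F : Type*} [NormedAddCommGroup E] [InnerProductSpace ℂ E]
    [FiniteDimensional ℂ E] [NormedAddCommGroup F] [InnerProductSpace ℂ F]
    [FiniteDimensional ℂ F] (J : E →ₗ[ℂ] F) : Prop :=
  LinearMap.adjoint J ∘ₗ J = (1 : E →ₗ[ℂ] E)

/-- `(F, P, J)` is a Naimark dilation of the observable `A`. -/
def IsNaimark {E F : Type*} [NormedAddCommGroup E] [InnerProductSpace ℂ E]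
    [FiniteDimensional ℂ E] [NormedAddCommGroup F] [InnerProductSpace ℂ F]
    [FiniteDimensional ℂ F] {Ω : Type*} [Fintype Ω]
    (A : Ω → E →ₗ[ℂ] E) (P : Ω → F →ₗ[ℂ] F) (J : E →ₗ[ℂ] F) : Prop :=
  IsPVM P ∧ IsIsometryOp J ∧ ∀ j, A j = LinearMap.adjoint J ∘ₗ P j ∘ₗ J

/-- A minimal Naimark dilation: the vectors `P j (J φ)` span the dilation space. -/
def IsMinimalNaimark {E F : Type*} [NormedAddCommGroup E] [InnerProductSpace ℂ E]
    [FiniteDimensional ℂ E] [NormedAddCommGroup F] [InnerProductSpace ℂ F]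
    [FiniteDimensional ℂ F] {Ω : Type*} [Fintype Ω]
    (A : Ω → E →ₗ[ℂ] E) (P : Ω → F →ₗ[ℂ] F) (J : E →ₗ[ℂ] F) : Prop :=
  IsNaimark A P J ∧ Submodule.span ℂ {x : F | ∃ j φ, x = P j (J φ)} = ⊤

/-- The sandwich map `σ ↦ U ∘ σ ∘ V` as a linear map on operators. -/
def sandwich {E F : Type*} [NormedAddCommGroup E] [InnerProductSpace ℂ E]
    [NormedAddCommGroup F] [InnerProductSpace ℂ F]
    (U : E →ₗ[ℂ] F) (V : F →ₗ[ℂ] E) : (E →ₗ[ℂ] E) →ₗ[ℂ] (F →ₗ[ℂ] F) where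
  toFun σ := U ∘ₗ σ ∘ₗ V
  map_add' σ τ := by
    ext x; simp [LinearMap.add_comp, LinearMap.comp_add]
  map_smul' c σ := by
    ext x; simp

/-- The least disturbing channel `ρ ↦ ∑ j, P j J ρ J* P j` associated with
a Naimark dilation `(F, P, J)`. -/
def leastDisturbing {E F : Type*} [NormedAddCommGroup E] [InnerProductSpace ℂ E]
    [FiniteDimensional ℂ E] [NormedAddCommGroup F] [InnerProductSpace ℂ F]
    [FiniteDimensional ℂ F] {Ω : Type*} [Fintype Ω]
    (P : Ω → F →ₗ[ℂ] F) (J : E →ₗ[ℂ] F) : (E →ₗ[ℂ] E) →ₗ[ℂ] (F →ₗ[ℂ] F) :=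
  ∑ j, sandwich (P j ∘ₗ J) (LinearMap.adjoint J ∘ₗ P j)

/-- The Lüders channel `σ ↦ ∑ j, P j σ P j` of a PVM `P`. -/
def ludersChannel {F : Type*} [NormedAddCommGroup F] [InnerProductSpace ℂ F]
    {Ω : Type*} [Fintype Ω] (P : Ω → F →ₗ[ℂ] F) : (F →ₗ[ℂ] F) →ₗ[ℂ] (F →ₗ[ℂ] F) :=
  ∑ j, sandwich (P j) (P j)

/-- Complete positivity of a map on operators, expressed through the existence of
a Kraus decomposition (equivalent to complete positivity in finite dimension). -/
def IsCPMap {E F : Type*} [NormedAddCommGroup E] [InnerProductSpace ℂ E]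
    [FiniteDimensional ℂ E] [NormedAddCommGroup F] [InnerProductSpace ℂ F]
    [FiniteDimensional ℂ F] (Λ : (E →ₗ[ℂ] E) →ₗ[ℂ] (F →ₗ[ℂ] F)) : Prop :=
  ∃ (n : ℕ) (V : Fin n → (E →ₗ[ℂ] F)),
    ∀ ρ, Λ ρ = ∑ i, V i ∘ₗ ρ ∘ₗ LinearMap.adjoint (V i)

/-- A quantum channel: a completely positive trace-preserving linear map. -/
def IsChannel {E F : Type*} [NormedAddCommGroup E] [InnerProductSpace ℂ E]
    [FiniteDimensional ℂ E] [NormedAddCommGroup F] [InnerProductSpace ℂ F]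
    [FiniteDimensional ℂ F] (Λ : (E →ₗ[ℂ] E) →ₗ[ℂ] (F →ₗ[ℂ] F)) : Prop :=
  IsCPMap Λ ∧ ∀ ρ, LinearMap.trace ℂ F (Λ ρ) = LinearMap.trace ℂ E ρ

/-- `Λd` is the Heisenberg dual of `Λ`: `tr[Λ(ρ) B] = tr[ρ Λd(B)]` for all `ρ, B`. -/
def IsHeisenbergDual {E F : Type*} [NormedAddCommGroup E] [InnerProductSpace ℂ E]
    [FiniteDimensional ℂ E] [NormedAddCommGroup F] [InnerProductSpace ℂ F]
    [FiniteDimensional ℂ F] (Λ : (E →ₗ[ℂ] E) →ₗ[ℂ] (F →ₗ[ℂ] F))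
    (Λd : (F →ₗ[ℂ] F) →ₗ[ℂ] (E →ₗ[ℂ] E)) : Prop :=
  ∀ ρ B, LinearMap.trace ℂ F (Λ ρ ∘ₗ B) = LinearMap.trace ℂ E (ρ ∘ₗ Λd B)

/-- Channel post-processing: `Λ₀ ⪯ Λ` iff `Λ₀ = Γ ∘ Λ` for some channel `Γ`. -/
def ChanPP {E F G : Type*} [NormedAddCommGroup E] [InnerProductSpace ℂ E]
    [FiniteDimensional ℂ E] [NormedAddCommGroup F] [InnerProductSpace ℂ F]
    [FiniteDimensional ℂ F] [NormedAddCommGroup G] [InnerProductSpace ℂ G]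
    [FiniteDimensional ℂ G]
    (Λ₀ : (E →ₗ[ℂ] E) →ₗ[ℂ] (G →ₗ[ℂ] G)) (Λ : (E →ₗ[ℂ] E) →ₗ[ℂ] (F →ₗ[ℂ] F)) : Prop :=
  ∃ Γ : (F →ₗ[ℂ] F) →ₗ[ℂ] (G →ₗ[ℂ] G), IsChannel Γ ∧ Λ₀ = Γ ∘ₗ Λ

/-- Post-processing equivalence of channels. -/
def ChanEquiv {E F G : Type*} [NormedAddCommGroup E] [InnerProductSpace ℂ E]
    [FiniteDimensional ℂ E] [NormedAddCommGroup F] [InnerProductSpace ℂ F]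
    [FiniteDimensional ℂ F] [NormedAddCommGroup G] [InnerProductSpace ℂ G]
    [FiniteDimensional ℂ G]
    (Λ₀ : (E →ₗ[ℂ] E) →ₗ[ℂ] (G →ₗ[ℂ] G)) (Λ : (E →ₗ[ℂ] E) →ₗ[ℂ] (F →ₗ[ℂ] F)) : Prop :=
  ChanPP Λ₀ Λ ∧ ChanPP Λ Λ₀

/-- Observable post-processing: `B ⪯ A` via a stochastic matrix `p`. -/
def ObsPP {E : Type*} [NormedAddCommGroup E] [InnerProductSpace ℂ E]
    [FiniteDimensional ℂ E] {Ω₁ Ω₂ : Type*} [Fintype Ω₁] [Fintype Ω₂]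
    (B : Ω₂ → E →ₗ[ℂ] E) (A : Ω₁ → E →ₗ[ℂ] E) : Prop :=
  ∃ p : Ω₂ → Ω₁ → ℝ, (∀ k j, 0 ≤ p k j) ∧ (∀ j, ∑ k, p k j = 1) ∧
    ∀ k, B k = ∑ j, (p k j : ℂ) • A j

/-- Post-processing equivalence of observables. -/
def ObsEquiv {E : Type*} [NormedAddCommGroup E] [InnerProductSpace ℂ E]
    [FiniteDimensional ℂ E] {Ω₁ Ω₂ : Type*} [Fintype Ω₁] [Fintype Ω₂]
    (B : Ω₂ → E →ₗ[ℂ] E) (A : Ω₁ → E →ₗ[ℂ] E) : Prop :=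
  ObsPP B A ∧ ObsPP A B

/-- `B` is a relabeling of `A` (along some function `f` on outcomes). -/
def IsRelabeling {E : Type*} [NormedAddCommGroup E] [InnerProductSpace ℂ E]
    [FiniteDimensional ℂ E] {Ω₁ Ω₂ : Type*} [Fintype Ω₁] [Fintype Ω₂] [DecidableEq Ω₂]
    (B : Ω₂ → E →ₗ[ℂ] E) (A : Ω₁ → E →ₗ[ℂ] E) : Prop :=
  ∃ f : Ω₁ → Ω₂, ∀ k, B k = ∑ j ∈ Finset.univ.filter (fun j => f j = k), A j

/-- A minimally sufficient observable: every observable post-processing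
equivalent to it is a refinement of it (i.e. it is a relabeling of every such observable). -/
def MinSufficient {E : Type*} [NormedAddCommGroup E] [InnerProductSpace ℂ E]
    [FiniteDimensional ℂ E] {Ω : Type*} [Fintype Ω] [DecidableEq Ω]
    (A : Ω → E →ₗ[ℂ] E) : Prop :=
  ∀ (Ω' : Type) (_ : Fintype Ω') (B : Ω' → E →ₗ[ℂ] E),
    IsPOVM B → ObsEquiv B A → IsRelabeling A B

/-- Compatibility of an observable `A` and a channel `Λ`: there is an instrument
with the outcome statistics of `A` whose total channel is `Λ`. -/
def CompatObsChan {E F : Type*} [NormedAddCommGroup E] [InnerProductSpace ℂ E]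
    [FiniteDimensional ℂ E] [NormedAddCommGroup F] [InnerProductSpace ℂ F]
    [FiniteDimensional ℂ F] {Ω : Type*} [Fintype Ω]
    (A : Ω → E →ₗ[ℂ] E) (Λ : (E →ₗ[ℂ] E) →ₗ[ℂ] (F →ₗ[ℂ] F)) : Prop :=
  ∃ I : Ω → ((E →ₗ[ℂ] E) →ₗ[ℂ] (F →ₗ[ℂ] F)),
    (∀ j, IsCPMap (I j)) ∧
    (∀ j ρ, LinearMap.trace ℂ F (I j ρ) = LinearMap.trace ℂ E (ρ ∘ₗ A j)) ∧
    ∑ j, I j = Λ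

/-- Joint measurability (compatibility) of two observables. -/
def JointlyMeasurable {E : Type*} [NormedAddCommGroup E] [InnerProductSpace ℂ E]
    [FiniteDimensional ℂ E] {Ω₁ Ω₂ : Type*} [Fintype Ω₁] [Fintype Ω₂]
    (A : Ω₁ → E →ₗ[ℂ] E) (B : Ω₂ → E →ₗ[ℂ] E) : Prop :=
  ∃ G : Ω₁ × Ω₂ → E →ₗ[ℂ] E, IsPOVM G ∧
    (∀ j, A j = ∑ k, G (j, k)) ∧ (∀ k, B k = ∑ j, G (j, k))

/-- An extreme observable: an extreme point of the convex set of observables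
with the given outcome set. -/
def IsExtremeObs {E : Type*} [NormedAddCommGroup E] [InnerProductSpace ℂ E]
    [FiniteDimensional ℂ E] {Ω : Type*} [Fintype Ω] (A : Ω → E →ₗ[ℂ] E) : Prop :=
  IsPOVM A ∧ ∀ (B₁ B₂ : Ω → E →ₗ[ℂ] E) (t : ℝ), IsPOVM B₁ → IsPOVM B₂ →
    0 < t → t < 1 → (∀ j, A j = (t : ℂ) • B₁ j + ((1 - t : ℝ) : ℂ) • B₂ j) →
    (B₁ = A ∧ B₂ = A)

/-- `|x⟩⟨y|` : the rank-one operator `z ↦ ⟨y, z⟩ x`. -/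
def outer {E : Type*} [NormedAddCommGroup E] [InnerProductSpace ℂ E] (x y : E) :
    E →ₗ[ℂ] E where
  toFun z := (inner ℂ y z : ℂ) • x
  map_add' z w := by simp [inner_add_right, add_smul]
  map_smul' c z := by simp [inner_smul_right, smul_smul]

/-- Loewner order on operators: `S ≤ T` iff `T - S` is positive semidefinite. -/
def LoewnerLE {E : Type*} [NormedAddCommGroup E] [InnerProductSpace ℂ E]
    [FiniteDimensional ℂ E] (S T : E →ₗ[ℂ] E) : Prop :=
  IsPosOp (T - S)

/-- Compression of an operator `T` on `F` to a subspace `S`: `P_S ∘ T ∘ incl_S`. -/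
def compressTo {F : Type*} [NormedAddCommGroup F] [InnerProductSpace ℂ F]
    [FiniteDimensional ℂ F] (S : Submodule ℂ F) (T : F →ₗ[ℂ] F) : ↥S →ₗ[ℂ] ↥S :=
  have := FiniteDimensional.complete ℂ ↥S
  (S.orthogonalProjectionOnto).toLinearMap ∘ₗ T ∘ₗ S.subtype

end

section aux

variable {E : Type*} [NormedAddCommGroup E] [InnerProductSpace ℂ E] [FiniteDimensional ℂ E]

lemma outer_apply' (x y z : E) : outer x y z = (inner ℂ y z : ℂ) • x := rfl

lemma adjoint_outer (x y : E) : LinearMap.adjoint (outer x y) = outer y x := by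
  symm
  rw [LinearMap.eq_adjoint_iff]
  intro u v
  simp only [outer_apply', inner_smul_left, inner_smul_right, inner_conj_symm]
  ring

lemma euclidean_sum_single {ι : Type*} [Fintype ι] [DecidableEq ι]
    (x : EuclideanSpace ℂ ι) : ∑ i, x i • EuclideanSpace.single i (1 : ℂ) = x := by
  have h := (EuclideanSpace.basisFun ι ℂ).sum_repr x
  simpa [EuclideanSpace.basisFun_apply, EuclideanSpace.basisFun_repr] using h

end aux

/-- The concrete construction of a minimal Naimark dilation from spectral
decompositions `A(j) = ∑ₖ |d_{j,k}⟩⟨d_{j,k}|` with `r_j = rank A(j)`: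
`M = ℂ^{r_1} ⊕ ⋯ ⊕ ℂ^{r_n}`, `Jψ = ∑_{j,k} ⟨d_{j,k}, ψ⟩ e_{j,k}`,
`P(j) = ∑ₖ |e_{j,k}⟩⟨e_{j,k}|` yield a minimal Naimark dilation `(M, P, J)` of `A`. -/
theorem stmt_17 {H : Type*}
    [NormedAddCommGroup H] [InnerProductSpace ℂ H] [FiniteDimensional ℂ H]
    {n : ℕ} (r : Fin n → ℕ)
    (A : Fin n → H →ₗ[ℂ] H) (hA : IsPOVM A)
    (d : ∀ j : Fin n, Fin (r j) → H)
    (hspec : ∀ j, A j = ∑ k, outer (d j k) (d j k))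
    (horth : ∀ j (k l : Fin (r j)), k ≠ l → (inner ℂ (d j k) (d j l) : ℂ) = 0)
    (hnz : ∀ j k, d j k ≠ 0)
    (hrank : ∀ j, r j = Module.finrank ℂ ↥(LinearMap.range (A j)))
    (J : H →ₗ[ℂ] EuclideanSpace ℂ (Σ j : Fin n, Fin (r j)))
    (hJ : ∀ (ψ : H) (p : Σ j : Fin n, Fin (r j)),
      (inner ℂ (EuclideanSpace.single p (1 : ℂ)) (J ψ) : ℂ) = (inner ℂ (d p.1 p.2) ψ : ℂ))
    (P : Fin n → (EuclideanSpace ℂ (Σ j : Fin n, Fin (r j)) →ₗ[ℂ]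
      EuclideanSpace ℂ (Σ j : Fin n, Fin (r j))))
    (hP : ∀ j, P j = ∑ k : Fin (r j),
      outer (EuclideanSpace.single (⟨j, k⟩ : Σ j : Fin n, Fin (r j)) (1 : ℂ))
            (EuclideanSpace.single (⟨j, k⟩ : Σ j : Fin n, Fin (r j)) (1 : ℂ))) :
    IsIsometryOp J ∧ IsPVM P ∧ (∀ j, A j = LinearMap.adjoint J ∘ₗ P j ∘ₗ J) ∧
    IsMinimalNaimark A P J := by
  classical
  have hJ' : ∀ (ψ : H) (p : Σ j : Fin n, Fin (r j)),
      J ψ p = (inner ℂ (d p.1 p.2) ψ : ℂ) := by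
    intro ψ p
    have h := hJ ψ p
    simpa [EuclideanSpace.inner_single_left] using h
  have hJadj : ∀ p : Σ j : Fin n, Fin (r j),
      LinearMap.adjoint J (EuclideanSpace.single p (1 : ℂ)) = d p.1 p.2 := by
    intro p
    apply ext_inner_right ℂ
    intro φ
    rw [LinearMap.adjoint_inner_left]
    exact hJ φ p
  -- the isometry property
  have hiso : IsIsometryOp J := by
    unfold IsIsometryOp
    apply LinearMap.ext
    intro ψ
    apply ext_inner_right ℂ
    intro φ
    rw [LinearMap.comp_apply, LinearMap.adjoint_inner_left, Module.End.one_apply]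
    calc (inner ℂ (J ψ) (J φ) : ℂ)
        = ∑ p : Σ j : Fin n, Fin (r j),
            (inner ℂ ψ (d p.1 p.2) : ℂ) * (inner ℂ (d p.1 p.2) φ : ℂ) := by
          rw [PiLp.inner_apply]
          refine Finset.sum_congr rfl fun p _ => ?_
          rw [hJ', hJ']
          rw [RCLike.inner_apply, inner_conj_symm, mul_comm]
      _ = ∑ j, ∑ k : Fin (r j),
            (inner ℂ ψ (d j k) : ℂ) * (inner ℂ (d j k) φ : ℂ) := by
          rw [← Finset.univ_sigma_univ, Finset.sum_sigma]
      _ = (inner ℂ ψ φ : ℂ) := by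
          conv_rhs => rw [show φ = (∑ j, A j) φ by rw [hA.2]; simp]
          rw [LinearMap.sum_apply, inner_sum]
          refine Finset.sum_congr rfl fun j _ => ?_
          rw [hspec, LinearMap.sum_apply, inner_sum]
          refine Finset.sum_congr rfl fun k _ => ?_
          rw [outer_apply', inner_smul_right]
          ring
  -- pointwise formula for P
  have hPapply : ∀ j (x : EuclideanSpace ℂ (Σ j : Fin n, Fin (r j))),
      P j x = ∑ k : Fin (r j),
        x ⟨j, k⟩ • EuclideanSpace.single (⟨j, k⟩ : Σ j : Fin n, Fin (r j)) (1 : ℂ) := by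
    intro j x
    rw [hP, LinearMap.sum_apply]
    refine Finset.sum_congr rfl fun k _ => ?_
    rw [outer_apply', EuclideanSpace.inner_single_left]
    simp
  have hPsingle : ∀ j (l : Fin (r j)),
      P j (EuclideanSpace.single (⟨j, l⟩ : Σ j : Fin n, Fin (r j)) (1 : ℂ))
        = EuclideanSpace.single (⟨j, l⟩ : Σ j : Fin n, Fin (r j)) (1 : ℂ) := by
    intro j l
    rw [hPapply]
    rw [Finset.sum_eq_single l]
    · rw [EuclideanSpace.single_apply, if_pos rfl, one_smul]
    · intro k _ hk
      rw [EuclideanSpace.single_apply, if_neg, zero_smul]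
      simp [Sigma.mk.inj_iff, hk, Ne.symm hk]
    · simp
  -- P is a PVM
  have hPsa : ∀ j, LinearMap.adjoint (P j) = P j := by
    intro j
    rw [hP, map_sum]
    exact Finset.sum_congr rfl fun k _ => adjoint_outer _ _
  have hPP : ∀ j, P j ∘ₗ P j = P j := by
    intro j
    apply LinearMap.ext
    intro x
    rw [LinearMap.comp_apply]
    conv_lhs => rw [hPapply j x, map_sum]
    rw [hPapply j x]
    refine Finset.sum_congr rfl fun k _ => ?_
    rw [map_smul, hPsingle]
  have hPsum : ∑ j, P j = (1 : EuclideanSpace ℂ (Σ j : Fin n, Fin (r j)) →ₗ[ℂ]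
      EuclideanSpace ℂ (Σ j : Fin n, Fin (r j))) := by
    apply LinearMap.ext
    intro x
    rw [LinearMap.sum_apply, Module.End.one_apply]
    calc ∑ j, P j x
        = ∑ j, ∑ k : Fin (r j),
            x ⟨j, k⟩ • EuclideanSpace.single (⟨j, k⟩ : Σ j : Fin n, Fin (r j)) (1 : ℂ) :=
          Finset.sum_congr rfl fun j _ => hPapply j x
      _ = ∑ p : Σ j : Fin n, Fin (r j), x p • EuclideanSpace.single p (1 : ℂ) := by
          rw [← Finset.univ_sigma_univ, Finset.sum_sigma]
      _ = x := euclidean_sum_single x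
  have hPVM : IsPVM P := ⟨fun j => ⟨hPsa j, hPP j⟩, hPsum⟩
  -- the dilation property
  have hAJ : ∀ j, A j = LinearMap.adjoint J ∘ₗ P j ∘ₗ J := by
    intro j
    apply LinearMap.ext
    intro ψ
    rw [LinearMap.comp_apply, LinearMap.comp_apply, hPapply, map_sum, hspec,
      LinearMap.sum_apply]
    refine Finset.sum_congr rfl fun k _ => ?_
    rw [outer_apply', map_smul, hJadj, hJ']
  -- minimality
  have hmin : Submodule.span ℂ
      {x : EuclideanSpace ℂ (Σ j : Fin n, Fin (r j)) | ∃ j φ, x = P j (J φ)} = ⊤ := by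
    rw [eq_top_iff]
    intro x _
    rw [← euclidean_sum_single x]
    refine Submodule.sum_mem _ fun p _ => Submodule.smul_mem _ _ ?_
    obtain ⟨j, l⟩ := p
    have key : P j (J (d j l)) = (inner ℂ (d j l) (d j l) : ℂ) •
        EuclideanSpace.single (⟨j, l⟩ : Σ j : Fin n, Fin (r j)) (1 : ℂ) := by
      rw [hPapply, Finset.sum_eq_single l]
      · rw [hJ']
      · intro k _ hk
        rw [hJ']
        simp [horth j k l hk]
      · simp
    have hd : (inner ℂ (d j l) (d j l) : ℂ) ≠ 0 := by
      simpa [inner_self_eq_zero] using hnz j l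
    have hsingle : EuclideanSpace.single (⟨j, l⟩ : Σ j : Fin n, Fin (r j)) (1 : ℂ)
        = (inner ℂ (d j l) (d j l) : ℂ)⁻¹ • P j (J (d j l)) := by
      rw [key, smul_smul, inv_mul_cancel₀ hd, one_smul]
    rw [hsingle]
    exact Submodule.smul_mem _ _ (Submodule.subset_span ⟨j, d j l, rfl⟩)
  exact ⟨hiso, hPVM, hAJ, ⟨⟨hPVM, hiso, hAJ⟩, hmin⟩⟩
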